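/- Let b, p ∈ ℂ and suppose h₁, h₂, h₃ ∈ ℂ[∂,λ] satisfy in ℂ[∂,λ,μ]: (∂+λ+μ+b/2)·h₁(∂,λ) = (∂+2μ)·h₁(∂+μ,λ), (∂+λ+μ+b/2)·h₂(∂,λ) = (∂+b)·h₂(∂+μ,λ) + p·(∂+2λ+2μ), and (∂+λ+μ+b/2)·h₃(∂,λ) = (∂+μ+b/2)·h₃(∂+μ,λ). Then h₁ = h₂ = h₃ = 0 and p = 0. -/
import Mathlib

open MvPolynomial

lemma aux14 (c : ℂ) (h : MvPolynomial (Fin 2) ℂ)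
    (hz : ∀ x l : ℂ, l ≠ c → MvPolynomial.eval ![x, l] h = 0) : h = 0 := by
  have key : (X 1 - C c) * h = 0 := by
    apply MvPolynomial.funext
    intro v
    have hv : ![v 0, v 1] = v := by
      funext i; fin_cases i <;> simp
    simp only [map_mul, map_sub, eval_X, eval_C, map_zero]
    rcases eq_or_ne (v 1) c with hc | hc
    · rw [hc]; ring
    · rw [← hv] at hc ⊢
      have := hz (v 0) (v 1) (by simpa using hc)
      simp only [Matrix.cons_val_one, Matrix.head_cons] at *
      rw [this]; ring
  have hx : (X 1 - C c : MvPolynomial (Fin 2) ℂ) ≠ 0 := by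
    intro h0
    have := congrArg (MvPolynomial.eval (fun _ => c + 1)) h0
    simp at this
  exact (mul_eq_zero.mp key).resolve_left hx

theorem stmt14 (b p : ℂ) (h₁ h₂ h₃ : MvPolynomial (Fin 2) ℂ)
    (e1 : ∀ x l μ : ℂ,
      (x + l + μ + b/2) * MvPolynomial.eval ![x, l] h₁
        = (x + 2*μ) * MvPolynomial.eval ![x + μ, l] h₁)
    (e2 : ∀ x l μ : ℂ,
      (x + l + μ + b/2) * MvPolynomial.eval ![x, l] h₂
        = (x + b) * MvPolynomial.eval ![x + μ, l] h₂ + p * (x + 2*l + 2*μ))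
    (e3 : ∀ x l μ : ℂ,
      (x + l + μ + b/2) * MvPolynomial.eval ![x, l] h₃
        = (x + μ + b/2) * MvPolynomial.eval ![x + μ, l] h₃) :
    h₁ = 0 ∧ h₂ = 0 ∧ h₃ = 0 ∧ p = 0 := by
  -- p = 0 from e2 with l = b/2, μ = 0, x = 1 - b
  have hp : p = 0 := by
    have := e2 (1 - b) (b/2) 0
    simp only [add_zero, mul_zero] at this
    linear_combination -this
  have H1 : h₁ = 0 := by
    apply aux14 (-(b/2))
    intro x l hl
    have := e1 x l 0
    simp only [add_zero, mul_zero] at this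
    have key : (l + b/2) * MvPolynomial.eval ![x, l] h₁ = 0 := by linear_combination this
    have hne : l + b/2 ≠ 0 := fun h => hl (by linear_combination h)
    exact (mul_eq_zero.mp key).resolve_left hne
  have H3 : h₃ = 0 := by
    apply aux14 0
    intro x l hl
    have := e3 x l 0
    simp only [add_zero, mul_zero] at this
    have key : l * MvPolynomial.eval ![x, l] h₃ = 0 := by linear_combination this
    exact (mul_eq_zero.mp key).resolve_left hl
  have H2 : h₂ = 0 := by
    apply aux14 (b/2)
    intro x l hl
    have := e2 x l 0
    rw [hp] at this
    simp only [add_zero, mul_zero, zero_mul] at this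
    have key : (l - b/2) * MvPolynomial.eval ![x, l] h₂ = 0 := by linear_combination this
    have hne : l - b/2 ≠ 0 := sub_ne_zero_of_ne hl
    exact (mul_eq_zero.mp key).resolve_left hne
  exact ⟨H1, H2, H3, hp⟩
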